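/- arXiv:0910.0487 — 3 statements merged into one kernel-verified Lean document; each statement's English description precedes it below -/
import Mathlib

section
/- If N is a symmetric positive semidefinite n×n real matrix with 3-dimensional kernel spanned by the orthonormal columns of an n×3 matrix e, and R is a symmetric n×n matrix such that K(m) := m·N + R is symmetric positive definite for all sufficiently large m, then K(m)^{-1} = e·η^{-1}·e^t + O(m^{-1}) as m → ∞, where η := e^t·R·e (assumed invertible); i.e., there exist constants C, m₀ > 0 such that ‖K(m)^{-1} − e η^{-1} e^t‖ ≤ C/m for all m ≥ m₀. -/
open Matrix NNReal

attribute [local instance] Matrix.linftyOpNormedAddCommGroup Matrix.linftyOpNormedRing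

attribute [local instance] Matrix.linftyOpNormedSpace

lemma aux_range (n : ℕ) (N : Matrix (Fin n) (Fin n) ℝ) (hsym : Nᵀ = N)
    (x : Fin n → ℝ) (hperp : ∀ y, N.mulVec y = 0 → y ⬝ᵥ x = 0) :
    ∃ w, N.mulVec w = x := by
  set T : (Fin n → ℝ) →ₗ[ℝ] (Fin n → ℝ) := Matrix.mulVecLin N with hT
  have hsymdot : ∀ a b : Fin n → ℝ, (N.mulVec a) ⬝ᵥ b = a ⬝ᵥ (N.mulVec b) := by
    intro a b
    rw [Matrix.dotProduct_mulVec, ← Matrix.vecMul_transpose, hsym]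
  have hinf : LinearMap.range T ⊓ LinearMap.ker T = ⊥ := by
    rw [Submodule.eq_bot_iff]
    rintro v ⟨⟨w, rfl⟩, hv⟩
    have hv' : N.mulVec (N.mulVec w) = 0 := hv
    have : (N.mulVec w) ⬝ᵥ (N.mulVec w) = 0 := by
      rw [hsymdot, hv', dotProduct_zero]
    exact dotProduct_self_eq_zero.mp this
  have hsup : LinearMap.range T ⊔ LinearMap.ker T = ⊤ := by
    apply Submodule.eq_top_of_finrank_eq
    have h1 := Submodule.finrank_sup_add_finrank_inf_eq (LinearMap.range T) (LinearMap.ker T)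
    have h2 := LinearMap.finrank_range_add_finrank_ker T
    rw [hinf, finrank_bot, add_zero] at h1
    rw [h1, h2, Module.finrank_pi]
  have hx : x ∈ LinearMap.range T ⊔ LinearMap.ker T := by rw [hsup]; trivial
  rcases Submodule.mem_sup.mp hx with ⟨y, ⟨w, rfl⟩, z, hz, rfl⟩
  have hz0 : N.mulVec z = 0 := hz
  have h1 : z ⬝ᵥ (T w + z) = 0 := hperp z hz0
  have h2 : z ⬝ᵥ (T w) = 0 := by
    have : z ⬝ᵥ N.mulVec w = (N.mulVec z) ⬝ᵥ w := (hsymdot z w).symm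
    rw [hz0, zero_dotProduct] at this
    exact this
  have hz' : z = 0 := by
    have : z ⬝ᵥ z = 0 := by
      rw [dotProduct_add] at h1; linarith
    exact dotProduct_self_eq_zero.mp this
  exact ⟨w, by simp [hz', T]⟩

lemma aux_coercive (n : ℕ) (hn : 0 < n) (A : Matrix (Fin n) (Fin n) ℝ) (hA : A.PosDef) :
    ∃ c > 0, ∀ x : Fin n → ℝ, c * (x ⬝ᵥ x) ≤ x ⬝ᵥ A.mulVec x := by
  have hstar : ∀ x : Fin n → ℝ, star x = x := fun x => by funext i; simp
  set S : Set (Fin n → ℝ) := {x | x ⬝ᵥ x = 1} with hS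
  have hf : Continuous fun x : Fin n → ℝ => x ⬝ᵥ A.mulVec x := by
    have : (fun x : Fin n → ℝ => x ⬝ᵥ A.mulVec x)
        = fun x : Fin n → ℝ => ∑ i, ∑ j, x i * (A i j * x j) := by
      funext x; simp [dotProduct, Matrix.mulVec, Finset.mul_sum]
    rw [this]
    exact continuous_finset_sum _ fun i _ => continuous_finset_sum _ fun j _ =>
      (continuous_apply i).mul (continuous_const.mul (continuous_apply j))
  have hg : Continuous fun x : Fin n → ℝ => x ⬝ᵥ x := by
    have : (fun x : Fin n → ℝ => x ⬝ᵥ x) = fun x : Fin n → ℝ => ∑ i, x i * x i := by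
      funext x; simp [dotProduct]
    rw [this]
    exact continuous_finset_sum _ fun i _ => (continuous_apply i).mul (continuous_apply i)
  have hsq : ∀ (x : Fin n → ℝ) (i : Fin n), x i * x i ≤ x ⬝ᵥ x := by
    intro x i
    exact Finset.single_le_sum (f := fun j => x j * x j)
      (fun j _ => mul_self_nonneg _) (Finset.mem_univ i)
  have hSc : IsCompact S := by
    have hclosed : IsClosed S := isClosed_eq hg continuous_const
    have hsub : S ⊆ Metric.closedBall 0 1 := by
      intro x hx
      simp only [Metric.mem_closedBall, dist_zero_right]
      rw [pi_norm_le_iff_of_nonneg (by norm_num)]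
      intro i
      have h1 := hsq x i
      rw [Set.mem_setOf_eq.mp hx] at h1
      rw [Real.norm_eq_abs]
      exact abs_le.mpr ⟨by nlinarith, by nlinarith⟩
    exact (isCompact_closedBall 0 1).of_isClosed_subset hclosed hsub
  have hne : S.Nonempty := by
    refine ⟨Pi.single ⟨0, hn⟩ 1, ?_⟩
    simp [hS, dotProduct, Pi.single_apply]
  obtain ⟨x₀, hx₀S, hx₀min'⟩ := hSc.exists_isMinOn hne hf.continuousOn
  have hx₀ne : x₀ ≠ 0 := by
    intro h
    have := Set.mem_setOf_eq.mp hx₀S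
    rw [h] at this; simp at this
  have hcpos : 0 < x₀ ⬝ᵥ A.mulVec x₀ := by
    have := hA.dotProduct_mulVec_pos hx₀ne
    rwa [hstar] at this
  refine ⟨x₀ ⬝ᵥ A.mulVec x₀, hcpos, fun x => ?_⟩
  rcases eq_or_ne x 0 with rfl | hx
  · simp
  · have hxx : 0 < x ⬝ᵥ x := by
      rcases Function.ne_iff.mp hx with ⟨i, hi⟩
      have h1 := hsq x i
      have h2 : 0 < x i * x i := mul_self_pos.mpr hi
      linarith
    set s := Real.sqrt (x ⬝ᵥ x) with hs
    have hspos : 0 < s := Real.sqrt_pos.mpr hxx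
    have hs2 : s * s = x ⬝ᵥ x := Real.mul_self_sqrt hxx.le
    have hu : (s⁻¹ • x) ∈ S := by
      simp only [hS, Set.mem_setOf_eq, smul_dotProduct, dotProduct_smul,
        smul_eq_mul]
      rw [← hs2]
      field_simp
    have hmin : x₀ ⬝ᵥ A.mulVec x₀ ≤ (s⁻¹ • x) ⬝ᵥ A.mulVec (s⁻¹ • x) := hx₀min' hu
    have heq : (s⁻¹ • x) ⬝ᵥ A.mulVec (s⁻¹ • x) = s⁻¹ * s⁻¹ * (x ⬝ᵥ A.mulVec x) := by
      rw [Matrix.mulVec_smul, smul_dotProduct, dotProduct_smul]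
      simp [smul_eq_mul]; ring
    rw [heq] at hmin
    have h3 : (x₀ ⬝ᵥ A.mulVec x₀) * (x ⬝ᵥ x) ≤ (s⁻¹ * s⁻¹ * (x ⬝ᵥ A.mulVec x)) * (x ⬝ᵥ x) :=
      mul_le_mul_of_nonneg_right hmin hxx.le
    calc (x₀ ⬝ᵥ A.mulVec x₀) * (x ⬝ᵥ x) ≤ (s⁻¹ * s⁻¹ * (x ⬝ᵥ A.mulVec x)) * (x ⬝ᵥ x) := h3
      _ = x ⬝ᵥ A.mulVec x := by
          rw [← hs2]; field_simp

lemma aux_norm (n : ℕ) (A : Matrix (Fin n) (Fin n) ℝ) (b : ℝ) (hb : 0 ≤ b)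
    (h : ∀ i j, |A i j| ≤ b) : ‖A‖ ≤ n * b := by
  rw [Matrix.linfty_opNorm_def]
  have key : (Finset.univ.sup fun i : Fin n => ∑ j, ‖A i j‖₊) ≤ (n : ℝ≥0) * b.toNNReal := by
    apply Finset.sup_le
    intro i _
    calc ∑ j, ‖A i j‖₊ ≤ ∑ _j : Fin n, b.toNNReal := by
          apply Finset.sum_le_sum
          intro j _
          rw [← NNReal.coe_le_coe]
          simpa [Real.coe_toNNReal b hb, Real.norm_eq_abs] using h i j
      _ = (n : ℝ≥0) * b.toNNReal := by simp [mul_comm]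
  calc ((Finset.univ.sup fun i : Fin n => ∑ j, ‖A i j‖₊ : ℝ≥0) : ℝ)
      ≤ (((n : ℝ≥0) * b.toNNReal : ℝ≥0) : ℝ) := NNReal.coe_le_coe.mpr key
    _ = n * b := by simp [Real.coe_toNNReal b hb]

lemma aux_inv_entry (n : ℕ) (A : Matrix (Fin n) (Fin n) ℝ) (c : ℝ) (hc : 0 < c)
    (hA : IsUnit A.det)
    (hcoer : ∀ x : Fin n → ℝ, c * (x ⬝ᵥ x) ≤ x ⬝ᵥ A.mulVec x) :
    ∀ i j, |A⁻¹ i j| ≤ 1 / c := by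
  intro i j
  set y : Fin n → ℝ := A⁻¹.mulVec (Pi.single j 1) with hy
  have hAy : A.mulVec y = Pi.single j 1 := by
    rw [hy, Matrix.mulVec_mulVec, Matrix.mul_nonsing_inv A hA, Matrix.one_mulVec]
  have hyj : y ⬝ᵥ A.mulVec y = y j := by
    rw [hAy]
    simp [dotProduct, Pi.single_apply]
  have hkey : c * (y ⬝ᵥ y) ≤ y j := by
    have := hcoer y; rwa [hyj] at this
  have hsq : ∀ k, y k * y k ≤ y ⬝ᵥ y := fun k =>
    Finset.single_le_sum (f := fun l => y l * y l) (fun l _ => mul_self_nonneg _)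
      (Finset.mem_univ k)
  have hyy : (0:ℝ) ≤ y ⬝ᵥ y := Finset.sum_nonneg fun l _ => mul_self_nonneg _
  have hyj0 : 0 ≤ y j := le_trans (mul_nonneg hc.le hyy) hkey
  have hsq' : (c * (y ⬝ᵥ y)) * (c * (y ⬝ᵥ y)) ≤ y j * y j :=
    mul_self_le_mul_self (mul_nonneg hc.le hyy) hkey
  have h7 : c * c * ((y ⬝ᵥ y) * (y ⬝ᵥ y)) ≤ y ⬝ᵥ y := by nlinarith [hsq', hsq j]
  have ht : y ⬝ᵥ y ≤ 1 / (c * c) := by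
    rw [le_div_iff₀ (by positivity)]
    rcases eq_or_lt_of_le hyy with h0 | h0
    · rw [← h0]; norm_num
    · have h8 : (c * c * (y ⬝ᵥ y)) * (y ⬝ᵥ y) ≤ 1 * (y ⬝ᵥ y) := by linarith [h7]
      have := le_of_mul_le_mul_right h8 h0
      linarith
  have hAij : A⁻¹ i j = y i := by
    rw [hy]
    simp [Matrix.mulVec, dotProduct, Pi.single_apply]
  rw [hAij]
  have h2 := hsq i
  have h9 : |y i| = Real.sqrt (y i * y i) := (Real.sqrt_mul_self_eq_abs _).symm
  rw [h9]
  have h10 : y i * y i ≤ (1/c) * (1/c) := by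
    have : (1:ℝ) / (c * c) = (1/c) * (1/c) := by field_simp
    rw [this] at ht
    linarith
  calc Real.sqrt (y i * y i) ≤ Real.sqrt ((1/c) * (1/c)) := Real.sqrt_le_sqrt h10
    _ = 1/c := Real.sqrt_mul_self (by positivity)

/-- If `N` is symmetric PSD with 3-dimensional kernel spanned by the orthonormal columns of
`e`, `R` symmetric, `K m = m • N + R` positive definite for large `m`, and `η = eᵀ R e`
invertible, then `(K m)⁻¹ = e η⁻¹ eᵀ + O(m⁻¹)`. -/
theorem stmt0 (n : ℕ) (N R : Matrix (Fin n) (Fin n) ℝ)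
    (e : Matrix (Fin n) (Fin 3) ℝ)
    (hN : N.PosSemidef)
    (he : eᵀ * e = 1)
    (hker : ∀ x : Fin n → ℝ, N.mulVec x = 0 ↔ ∃ c : Fin 3 → ℝ, x = e.mulVec c)
    (hR : R.IsSymm)
    (K : ℝ → Matrix (Fin n) (Fin n) ℝ)
    (hK : ∀ m : ℝ, K m = m • N + R)
    (m₁ : ℝ) (hKpd : ∀ m ≥ m₁, (K m).PosDef)
    (η : Matrix (Fin 3) (Fin 3) ℝ) (hη : η = eᵀ * R * e) (hηinv : IsUnit η.det) :
    ∃ C > 0, ∃ m₀ > 0, ∀ m ≥ m₀,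
      ‖(K m)⁻¹ - e * η⁻¹ * eᵀ‖ ≤ C / m := by
  have hstar : ∀ x : Fin n → ℝ, star x = x := fun x => by funext i; simp
  -- n is positive
  have hn : 0 < n := by
    rcases Nat.eq_zero_or_pos n with h | h
    · exfalso
      subst h
      have h00 := congrFun (congrFun he 0) 0
      simp [Matrix.mul_apply, Matrix.one_apply] at h00
    · exact h
  -- N is symmetric (transpose)
  have hNsym : Nᵀ = N := by
    ext i j
    have := congrFun (congrFun hN.1 i) j
    simpa using this
  -- N * e = 0
  have hcole : ∀ j, N.mulVec (fun i => e i j) = 0 := by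
    intro j
    apply (hker _).mpr
    refine ⟨Pi.single j 1, ?_⟩
    funext i
    simp [Matrix.mulVec, dotProduct, Pi.single_apply]
  have hNe : N * e = 0 := by
    ext i j
    have := congrFun (hcole j) i
    simpa [Matrix.mul_apply, Matrix.mulVec, dotProduct] using this
  have hηη : η * η⁻¹ = 1 := Matrix.mul_nonsing_inv η hηinv
  set P : Matrix (Fin n) (Fin n) ℝ := e * η⁻¹ * eᵀ with hP
  set M : Matrix (Fin n) (Fin n) ℝ := 1 - R * P with hM
  -- eᵀ * M = 0
  have heM : eᵀ * M = 0 := by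
    have h1 : (eᵀ * R * e) * (η⁻¹ * eᵀ) = eᵀ * (R * P) := by
      rw [hP]; simp only [Matrix.mul_assoc]
    have h2 : eᵀ * (R * P) = eᵀ := by
      rw [← h1, ← hη, ← Matrix.mul_assoc, hηη, Matrix.one_mul]
    rw [hM, Matrix.mul_sub, Matrix.mul_one, h2, sub_self]
  -- find W with N * W = M
  have hcolw : ∀ j : Fin n, ∃ w, N.mulVec w = fun i => M i j := by
    intro j
    apply aux_range n N hNsym
    intro y hy
    rcases (hker y).mp hy with ⟨c, rfl⟩
    have h2 : eᵀ.mulVec (fun i => M i j) = 0 := by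
      funext k
      have := congrFun (congrFun heM k) j
      simpa [Matrix.mulVec, dotProduct, Matrix.mul_apply] using this
    calc (e.mulVec c) ⬝ᵥ (fun i => M i j)
        = c ⬝ᵥ (eᵀ.mulVec (fun i => M i j)) := by
          rw [dotProduct_comm, Matrix.dotProduct_mulVec, ← Matrix.mulVec_transpose,
            dotProduct_comm]
      _ = 0 := by rw [h2, dotProduct_zero]
  set W : Matrix (Fin n) (Fin n) ℝ :=
    Matrix.of (fun i j => Classical.choose (hcolw j) i) with hWdef
  have hNW : N * W = M := by
    ext i j
    have hspec := Classical.choose_spec (hcolw j)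
    have := congrFun hspec i
    simpa [Matrix.mul_apply, Matrix.mulVec, dotProduct, hWdef] using this
  -- coercivity constant
  set m₂ : ℝ := max m₁ 1 with hm₂
  have hm₂pos : (0:ℝ) < m₂ := lt_of_lt_of_le one_pos (le_max_right _ _)
  have hm₂m₁ : m₁ ≤ m₂ := le_max_left _ _
  obtain ⟨c, hc, hcoer⟩ := aux_coercive n hn (K m₂) (hKpd m₂ hm₂m₁)
  -- coercivity for all m ≥ m₂
  have hcoerm : ∀ m ≥ m₂, ∀ x : Fin n → ℝ, c * (x ⬝ᵥ x) ≤ x ⬝ᵥ (K m).mulVec x := by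
    intro m hm x
    have hKm : K m = K m₂ + (m - m₂) • N := by
      rw [hK, hK, sub_smul]; abel
    rw [hKm, Matrix.add_mulVec, dotProduct_add, Matrix.smul_mulVec,
      dotProduct_smul, smul_eq_mul]
    have hpsd : 0 ≤ x ⬝ᵥ N.mulVec x := by
      have := hN.dotProduct_mulVec_nonneg x; rwa [hstar] at this
    have : 0 ≤ (m - m₂) * (x ⬝ᵥ N.mulVec x) :=
      mul_nonneg (by linarith) hpsd
    have h4 := hcoer x
    linarith
  -- the constant
  set C : ℝ := ‖W‖ + (n * (1 / c)) * ‖R‖ * ‖W‖ + 1 with hC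
  have hCpos : 0 < C := by
    have h1 : 0 ≤ ‖W‖ := norm_nonneg _
    have h2 : 0 ≤ (n * (1 / c)) * ‖R‖ * ‖W‖ := by positivity
    rw [hC]; linarith
  refine ⟨C, hCpos, m₂, hm₂pos, ?_⟩
  intro m hm
  have hmpos : 0 < m := lt_of_lt_of_le hm₂pos hm
  have hm0 : m ≠ 0 := hmpos.ne'
  have hpd : (K m).PosDef := hKpd m (le_trans hm₂m₁ hm)
  have hdet : IsUnit (K m).det := hpd.det_pos.ne'.isUnit
  set B : Matrix (Fin n) (Fin n) ℝ := (K m)⁻¹ with hB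
  have hBK : B * K m = 1 := Matrix.nonsing_inv_mul (K m) hdet
  have hKB : K m * B = 1 := Matrix.mul_nonsing_inv (K m) hdet
  -- norm bound for B
  have hBentry : ∀ i j, |B i j| ≤ 1 / c :=
    aux_inv_entry n (K m) c hc hdet (hcoerm m hm)
  have hBnorm : ‖B‖ ≤ n * (1 / c) :=
    aux_norm n B (1 / c) (by positivity) hBentry
  -- K m * P = R * P
  have hNP : N * P = 0 := by
    rw [hP, ← Matrix.mul_assoc, ← Matrix.mul_assoc, hNe, Matrix.zero_mul, Matrix.zero_mul]
  have hKP : K m * P = R * P := by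
    rw [hK, Matrix.add_mul, Matrix.smul_mul, hNP, smul_zero, zero_add]
  -- main identity
  have hid : B - P = (1 / m) • (W - B * R * W) := by
    have h1 : B - P = B * M := by
      rw [hM, Matrix.mul_sub, Matrix.mul_one, ← hKP, ← Matrix.mul_assoc, hBK, Matrix.one_mul]
    have hNexp : N = (1 / m) • (K m - R) := by
      rw [hK, add_sub_cancel_right, smul_smul, one_div, inv_mul_cancel₀ hm0, one_smul]
    have h2 : B * N = (1 / m) • (1 - B * R) := by
      rw [hNexp, Matrix.mul_smul, Matrix.mul_sub, hBK]
    calc B - P = B * M := h1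
      _ = B * (N * W) := by rw [hNW]
      _ = (B * N) * W := by rw [Matrix.mul_assoc]
      _ = ((1 / m) • (1 - B * R)) * W := by rw [h2]
      _ = (1 / m) • ((1 - B * R) * W) := by rw [Matrix.smul_mul]
      _ = (1 / m) • (W - B * R * W) := by rw [Matrix.sub_mul, Matrix.one_mul]
  -- norm estimate
  have hnormid : ‖B - P‖ ≤ (1 / m) * (‖W‖ + (n * (1 / c)) * ‖R‖ * ‖W‖) := by
    rw [hid, norm_smul]
    have habs : ‖(1 / m : ℝ)‖ = 1 / m := by
      rw [Real.norm_eq_abs, abs_of_pos (by positivity)]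
    rw [habs]
    apply mul_le_mul_of_nonneg_left _ (by positivity)
    calc ‖W - B * R * W‖ ≤ ‖W‖ + ‖B * R * W‖ := norm_sub_le _ _
      _ ≤ ‖W‖ + ‖B‖ * ‖R‖ * ‖W‖ := by
          have h5 : ‖B * R * W‖ ≤ ‖B‖ * ‖R‖ * ‖W‖ := by
            calc ‖B * R * W‖ ≤ ‖B * R‖ * ‖W‖ := norm_mul_le _ _
              _ ≤ ‖B‖ * ‖R‖ * ‖W‖ :=
                  mul_le_mul_of_nonneg_right (norm_mul_le _ _) (norm_nonneg _)
          linarith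
      _ ≤ ‖W‖ + (n * (1 / c)) * ‖R‖ * ‖W‖ := by
          have h6 : ‖B‖ * ‖R‖ * ‖W‖ ≤ (n * (1 / c)) * ‖R‖ * ‖W‖ := by
            apply mul_le_mul_of_nonneg_right _ (norm_nonneg _)
            exact mul_le_mul_of_nonneg_right hBnorm (norm_nonneg _)
          linarith
  calc ‖(K m)⁻¹ - e * η⁻¹ * eᵀ‖ = ‖B - P‖ := by rw [hB, hP]
    _ ≤ (1 / m) * (‖W‖ + (n * (1 / c)) * ‖R‖ * ‖W‖) := hnormid
    _ ≤ C / m := by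
        rw [div_eq_mul_one_div C m, mul_comm C]
        apply mul_le_mul_of_nonneg_left _ (by positivity)
        rw [hC]; linarith
end

section
/- Consider the block linear system [K_HH(m), K_HL; K_LH, K_LL][x_H; x_L] = [b_H; b_L] with K_HH(m)^{-1} = e η^{-1} e^t + O(m^{-1}), S(m) := K_LL − K_LH K_HH(m)^{-1} K_HL, and S(m) → S_∞ invertible. Then the solution satisfies x_H(m) = e·c_H + O(m^{-1}) where c_H := η^{-1} e^t (b_H − K_HL x_L^∞) and x_L^∞ := S_∞^{-1}(b_L − K_LH e η^{-1} e^t b_H); i.e., x_H(m) converges to a vector in the column span of e. -/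
open Matrix

attribute [local instance] Matrix.linftyOpNormedAddCommGroup Matrix.linftyOpNormedRing

set_option maxHeartbeats 1000000 in
/-- For the block system `[K_HH(m), K_HL; K_LH, K_LL][x_H; x_L] = [b_H; b_L]` with
`K_HH(m)⁻¹ = e η⁻¹ eᵀ + O(m⁻¹)` and the Schur complements `S(m)` invertible with invertible
limit `S∞`, the solution satisfies `x_H(m) = e c_H + O(m⁻¹)` where
`c_H = η⁻¹ eᵀ (b_H - K_HL x_L^∞)` and `x_L^∞ = S∞⁻¹ (b_L - K_LH e η⁻¹ eᵀ b_H)`;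
i.e. `x_H(m)` converges to a vector in the column span of `e`. -/
theorem stmt4 (nH nL : ℕ)
    (KHH : ℝ → Matrix (Fin nH) (Fin nH) ℝ)
    (KHL : Matrix (Fin nH) (Fin nL) ℝ) (KLH : Matrix (Fin nL) (Fin nH) ℝ)
    (KLL : Matrix (Fin nL) (Fin nL) ℝ)
    (hsym : KHLᵀ = KLH)
    (e : Matrix (Fin nH) (Fin 3) ℝ) (η : Matrix (Fin 3) (Fin 3) ℝ)
    (hηinv : IsUnit η.det)
    (C₁ m₁ : ℝ)
    (hKHHinv : ∀ m ≥ m₁, IsUnit (KHH m).det ∧ ‖(KHH m)⁻¹ - e * η⁻¹ * eᵀ‖ ≤ C₁ / m)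
    (S : ℝ → Matrix (Fin nL) (Fin nL) ℝ)
    (hS : ∀ m, S m = KLL - KLH * (KHH m)⁻¹ * KHL)
    (hSinv : ∀ m ≥ m₁, IsUnit (S m).det)
    (Sinf : Matrix (Fin nL) (Fin nL) ℝ)
    (hSinf : Sinf = KLL - (KLH * e) * η⁻¹ * (eᵀ * KHL))
    (hSinfinv : IsUnit Sinf.det)
    (bH : Fin nH → ℝ) (bL : Fin nL → ℝ)
    (xH : ℝ → Fin nH → ℝ) (xL : ℝ → Fin nL → ℝ)
    (hsol : ∀ m ≥ m₁,
      (KHH m).mulVec (xH m) + KHL.mulVec (xL m) = bH ∧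
      KLH.mulVec (xH m) + KLL.mulVec (xL m) = bL) :
    ∃ C > 0, ∃ m₀ > 0, ∀ m ≥ m₀,
      ‖xH m - e.mulVec ((η⁻¹).mulVec (eᵀ.mulVec
          (bH - KHL.mulVec (Sinf⁻¹.mulVec
            (bL - KLH.mulVec ((e * η⁻¹ * eᵀ).mulVec bH))))))‖ ≤ C / m := by
  set P : Matrix (Fin nH) (Fin nH) ℝ := e * η⁻¹ * eᵀ with hPdef
  set xLinf : Fin nL → ℝ := Sinf⁻¹.mulVec (bL - KLH.mulVec (P.mulVec bH)) with hxLinfdef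
  have hSinfx : Sinf.mulVec xLinf = bL - KLH.mulVec (P.mulVec bH) := by
    rw [hxLinfdef, Matrix.mulVec_mulVec, Matrix.mul_nonsing_inv _ hSinfinv, Matrix.one_mulVec]
  have ha0 : (0:ℝ) ≤ ‖KLH‖ := norm_nonneg _
  have hb0 : (0:ℝ) ≤ ‖KHL‖ := norm_nonneg _
  have hs0 : (0:ℝ) ≤ ‖Sinf⁻¹‖ := norm_nonneg _
  have hp0 : (0:ℝ) ≤ ‖P‖ := norm_nonneg _
  have hβ0 : (0:ℝ) ≤ ‖bH‖ := norm_nonneg _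
  have hm₁1 : (0:ℝ) < max m₁ 1 := lt_of_lt_of_le one_pos (le_max_right _ _)
  have hC₁ : 0 ≤ C₁ := by
    have h := (hKHHinv (max m₁ 1) (le_max_left _ _)).2
    have h0 : (0:ℝ) ≤ C₁ / max m₁ 1 := le_trans (norm_nonneg _) h
    have := (le_div_iff₀ hm₁1).mp h0
    linarith
  set X : ℝ := 2 * ‖xLinf‖ + 2 * (‖Sinf⁻¹‖ * (‖KLH‖ * (C₁ * ‖bH‖))) with hXdef
  have hX0 : 0 ≤ X := by
    rw [hXdef]
    have h1 : 0 ≤ ‖Sinf⁻¹‖ * (‖KLH‖ * (C₁ * ‖bH‖)) :=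
      mul_nonneg hs0 (mul_nonneg ha0 (mul_nonneg hC₁ hβ0))
    have h2 : (0:ℝ) ≤ ‖xLinf‖ := norm_nonneg _
    linarith
  have hQ0 : 0 ≤ C₁ * (‖bH‖ + ‖KHL‖ * X) * (1 + ‖P‖ * ‖KHL‖ * ‖Sinf⁻¹‖ * ‖KLH‖) := by
    have h1 : 0 ≤ ‖bH‖ + ‖KHL‖ * X := add_nonneg hβ0 (mul_nonneg hb0 hX0)
    have h2 : 0 ≤ 1 + ‖P‖ * ‖KHL‖ * ‖Sinf⁻¹‖ * ‖KLH‖ := by positivity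
    exact mul_nonneg (mul_nonneg hC₁ h1) h2
  refine ⟨C₁ * (‖bH‖ + ‖KHL‖ * X) * (1 + ‖P‖ * ‖KHL‖ * ‖Sinf⁻¹‖ * ‖KLH‖) + 1, by linarith,
    max (max m₁ 1) (2 * (‖Sinf⁻¹‖ * (‖KLH‖ * ‖KHL‖ * C₁)) + 1), ?_, ?_⟩
  · have h1 : (0:ℝ) < 2 * (‖Sinf⁻¹‖ * (‖KLH‖ * ‖KHL‖ * C₁)) + 1 := by
      have := mul_nonneg hs0 (mul_nonneg (mul_nonneg ha0 hb0) hC₁)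
      linarith
    exact lt_of_lt_of_le h1 (le_max_right _ _)
  intro m hm
  have hm1 : m₁ ≤ m := le_trans (le_trans (le_max_left _ _) (le_max_left _ _)) hm
  have hmge1 : (1:ℝ) ≤ m := le_trans (le_trans (le_max_right _ _) (le_max_left _ _)) hm
  have hmpos : (0:ℝ) < m := lt_of_lt_of_le one_pos hmge1
  have hmbig : 2 * (‖Sinf⁻¹‖ * (‖KLH‖ * ‖KHL‖ * C₁)) + 1 ≤ m :=
    le_trans (le_max_right _ _) hm
  obtain ⟨hdet, hE⟩ := hKHHinv m hm1
  obtain ⟨heq1, heq2⟩ := hsol m hm1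
  set u : ℝ := C₁ / m with hu
  have hu0 : 0 ≤ u := div_nonneg hC₁ (le_of_lt hmpos)
  have huC : u ≤ C₁ := div_le_self hC₁ hmge1
  set E : Matrix (Fin nH) (Fin nH) ℝ := (KHH m)⁻¹ - P with hEdef
  have hE0 : 0 ≤ ‖E‖ := norm_nonneg _
  -- solve first equation for xH
  have hxHf : xH m = (KHH m)⁻¹.mulVec (bH - KHL.mulVec (xL m)) := by
    have h : xH m + ((KHH m)⁻¹ * KHL).mulVec (xL m) = (KHH m)⁻¹.mulVec bH := by
      have h0 := congrArg (fun v => (KHH m)⁻¹.mulVec v) heq1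
      simpa [Matrix.mulVec_add, Matrix.mulVec_mulVec,
        Matrix.nonsing_inv_mul _ hdet, Matrix.one_mulVec] using h0
    rw [Matrix.mulVec_sub, Matrix.mulVec_mulVec, ← h]
    abel
  -- Schur equation for xL
  have hSxL : (S m).mulVec (xL m) = bL - KLH.mulVec ((KHH m)⁻¹.mulVec bH) := by
    have h2' : KLL.mulVec (xL m) = bL - KLH.mulVec (xH m) := eq_sub_of_add_eq' heq2
    rw [hS, Matrix.sub_mulVec, h2', hxHf]
    simp only [Matrix.mulVec_sub, Matrix.mulVec_mulVec, Matrix.mul_assoc]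
    abel
  have hΔS : Sinf - S m = KLH * E * KHL := by
    rw [hSinf, hS, hEdef, hPdef]
    simp only [Matrix.mul_sub, Matrix.sub_mul, Matrix.mul_assoc]
    abel
  have hΔSn : ‖Sinf - S m‖ ≤ ‖KLH‖ * ‖KHL‖ * u := by
    rw [hΔS]
    calc ‖KLH * E * KHL‖ ≤ ‖KLH * E‖ * ‖KHL‖ := Matrix.linfty_opNorm_mul _ _
      _ ≤ ‖KLH‖ * ‖E‖ * ‖KHL‖ :=
        mul_le_mul_of_nonneg_right (Matrix.linfty_opNorm_mul _ _) hb0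
      _ ≤ ‖KLH‖ * ‖KHL‖ * u := by
        nlinarith [mul_nonneg (mul_nonneg ha0 hb0) (sub_nonneg.mpr hE)]
  have hhalf : ‖Sinf⁻¹‖ * ‖Sinf - S m‖ ≤ 1 / 2 := by
    have h1 : ‖Sinf⁻¹‖ * ‖Sinf - S m‖ ≤ ‖Sinf⁻¹‖ * (‖KLH‖ * ‖KHL‖ * u) :=
      mul_le_mul_of_nonneg_left hΔSn hs0
    have h2 : ‖Sinf⁻¹‖ * (‖KLH‖ * ‖KHL‖ * u) ≤ 1 / 2 := by
      rw [hu]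
      rw [show ‖Sinf⁻¹‖ * (‖KLH‖ * ‖KHL‖ * (C₁ / m)) = ‖Sinf⁻¹‖ * (‖KLH‖ * ‖KHL‖ * C₁) / m by
        ring]
      rw [div_le_iff₀ hmpos]
      nlinarith [hmbig]
    linarith
  -- identity for xL m - xLinf
  have hDid : xL m - xLinf =
      Sinf⁻¹.mulVec ((Sinf - S m).mulVec (xL m) - KLH.mulVec (E.mulVec bH)) := by
    have hkey : Sinf.mulVec (xL m - xLinf) =
        (Sinf - S m).mulVec (xL m) - KLH.mulVec (E.mulVec bH) := by
      rw [Matrix.mulVec_sub, hSinfx, Matrix.sub_mulVec, hSxL, hEdef]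
      simp only [Matrix.sub_mulVec, Matrix.mulVec_sub]
      abel
    calc xL m - xLinf = Sinf⁻¹.mulVec (Sinf.mulVec (xL m - xLinf)) := by
          rw [Matrix.mulVec_mulVec, Matrix.nonsing_inv_mul _ hSinfinv, Matrix.one_mulVec]
      _ = _ := by rw [hkey]
  have hDb0 : ‖xL m - xLinf‖ ≤
      ‖Sinf⁻¹‖ * (‖Sinf - S m‖ * ‖xL m‖) + ‖Sinf⁻¹‖ * (‖KLH‖ * (u * ‖bH‖)) := by
    rw [hDid]
    have w2 : ‖KLH.mulVec (E.mulVec bH)‖ ≤ ‖KLH‖ * (u * ‖bH‖) := by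
      refine le_trans (Matrix.linfty_opNorm_mulVec _ _) (mul_le_mul_of_nonneg_left ?_ ha0)
      exact le_trans (Matrix.linfty_opNorm_mulVec _ _) (mul_le_mul_of_nonneg_right hE hβ0)
    have w1 : ‖(Sinf - S m).mulVec (xL m) - KLH.mulVec (E.mulVec bH)‖ ≤
        ‖Sinf - S m‖ * ‖xL m‖ + ‖KLH‖ * (u * ‖bH‖) :=
      le_trans (norm_sub_le _ _) (add_le_add (Matrix.linfty_opNorm_mulVec _ _) w2)
    refine le_trans (Matrix.linfty_opNorm_mulVec _ _) ?_
    rw [← mul_add]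
    exact mul_le_mul_of_nonneg_left w1 hs0
  have t2 : ‖Sinf⁻¹‖ * (‖Sinf - S m‖ * ‖xL m‖) ≤ (1 / 2) * ‖xL m‖ := by
    rw [← mul_assoc]
    exact mul_le_mul_of_nonneg_right hhalf (norm_nonneg _)
  have t4 : ‖Sinf⁻¹‖ * (‖KLH‖ * (u * ‖bH‖)) ≤ ‖Sinf⁻¹‖ * (‖KLH‖ * (C₁ * ‖bH‖)) := by
    nlinarith [mul_nonneg (mul_nonneg hs0 ha0) hβ0, sub_nonneg.mpr huC]
  have htri : ‖xL m‖ ≤ ‖xLinf‖ + ‖xL m - xLinf‖ := by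
    have h : xLinf + (xL m - xLinf) = xL m := by abel
    calc ‖xL m‖ = ‖xLinf + (xL m - xLinf)‖ := by rw [h]
      _ ≤ _ := norm_add_le _ _
  have hxLb : ‖xL m‖ ≤ X := by rw [hXdef]; linarith
  -- sharper bound on the difference
  have hD2 : ‖xL m - xLinf‖ ≤
      ‖Sinf⁻¹‖ * ((‖KLH‖ * ‖KHL‖ * u) * X) + ‖Sinf⁻¹‖ * (‖KLH‖ * (u * ‖bH‖)) := by
    have h1 : ‖Sinf - S m‖ * ‖xL m‖ ≤ (‖KLH‖ * ‖KHL‖ * u) * X :=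
      mul_le_mul hΔSn hxLb (norm_nonneg _) (mul_nonneg (mul_nonneg ha0 hb0) hu0)
    have h2 := mul_le_mul_of_nonneg_left h1 hs0
    linarith
  -- decompose the target
  have hsplit : xH m - P.mulVec (bH - KHL.mulVec xLinf) =
      E.mulVec (bH - KHL.mulVec (xL m)) + P.mulVec (KHL.mulVec (xLinf - xL m)) := by
    rw [hxHf, hEdef, Matrix.sub_mulVec]
    simp only [Matrix.mulVec_sub]
    abel
  have hb1 : ‖bH - KHL.mulVec (xL m)‖ ≤ ‖bH‖ + ‖KHL‖ * X := by
    refine le_trans (norm_sub_le _ _) ?_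
    have := le_trans (Matrix.linfty_opNorm_mulVec KHL (xL m))
      (mul_le_mul_of_nonneg_left hxLb hb0)
    linarith
  have hT1 : ‖E.mulVec (bH - KHL.mulVec (xL m))‖ ≤ u * (‖bH‖ + ‖KHL‖ * X) := by
    refine le_trans (Matrix.linfty_opNorm_mulVec _ _) ?_
    exact mul_le_mul hE hb1 (norm_nonneg _) hu0
  have hT2 : ‖P.mulVec (KHL.mulVec (xLinf - xL m))‖ ≤
      ‖P‖ * (‖KHL‖ * ‖xL m - xLinf‖) := by
    refine le_trans (Matrix.linfty_opNorm_mulVec _ _) (mul_le_mul_of_nonneg_left ?_ hp0)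
    refine le_trans (Matrix.linfty_opNorm_mulVec _ _) ?_
    rw [norm_sub_rev]
  have hfinal : ‖xH m - P.mulVec (bH - KHL.mulVec xLinf)‖ ≤
      u * (‖bH‖ + ‖KHL‖ * X) +
      ‖P‖ * (‖KHL‖ * (‖Sinf⁻¹‖ * ((‖KLH‖ * ‖KHL‖ * u) * X) +
        ‖Sinf⁻¹‖ * (‖KLH‖ * (u * ‖bH‖)))) := by
    rw [hsplit]
    refine le_trans (norm_add_le _ _) (add_le_add hT1 (le_trans hT2 ?_))
    exact mul_le_mul_of_nonneg_left (mul_le_mul_of_nonneg_left hD2 hb0) hp0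
  -- rewrite the goal and conclude
  have hgoal : ‖xH m - e.mulVec ((η⁻¹).mulVec (eᵀ.mulVec (bH - KHL.mulVec xLinf)))‖ =
      ‖xH m - P.mulVec (bH - KHL.mulVec xLinf)‖ := by
    rw [Matrix.mulVec_mulVec, Matrix.mulVec_mulVec, ← hPdef]
  rw [hgoal]
  have heqB : u * (‖bH‖ + ‖KHL‖ * X) +
      ‖P‖ * (‖KHL‖ * (‖Sinf⁻¹‖ * ((‖KLH‖ * ‖KHL‖ * u) * X) +
        ‖Sinf⁻¹‖ * (‖KLH‖ * (u * ‖bH‖)))) =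
      C₁ * (‖bH‖ + ‖KHL‖ * X) * (1 + ‖P‖ * ‖KHL‖ * ‖Sinf⁻¹‖ * ‖KLH‖) / m := by
    rw [hu]
    field_simp
    ring
  rw [heqB] at hfinal
  refine le_trans hfinal ?_
  exact (div_le_div_iff_of_pos_right hmpos).mpr (by linarith)
end

section
/- Let K(m) be a family of symmetric positive definite n×n matrices with K(m) = m·N + R where N is symmetric positive semidefinite with 3-dimensional kernel range(e) (e having orthonormal columns) and R symmetric with η := e^t R e positive definite. Then the principal (inverse) square root satisfies K(m)^{-1/2} = e·η^{-1/2}·e^t + O(m^{-1/2}) as m → ∞. -/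
open Matrix

attribute [local instance] Matrix.linftyOpNormedAddCommGroup Matrix.linftyOpNormedRing

open scoped ComplexOrder in
/-- The square root of a positive semidefinite matrix, as defined in the older Mathlib
(`Matrix.PosSemidef.sqrt`, since removed). -/
noncomputable def Matrix.PosSemidef.sqrt {n 𝕜 : Type*} [Fintype n] [RCLike 𝕜] [DecidableEq n]
    {A : Matrix n n 𝕜} (hA : A.PosSemidef) : Matrix n n 𝕜 :=
  hA.1.eigenvectorUnitary.1 * diagonal ((↑) ∘ (√·) ∘ hA.1.eigenvalues) *
    (star hA.1.eigenvectorUnitary : Matrix n n 𝕜)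

section Helpers

open Matrix

set_option linter.unusedSectionVars false

variable {k : Type*} [Fintype k] [DecidableEq k]

lemma Matrix.PosSemidef.sqrt_mul_self {A : Matrix k k ℝ} (hA : A.PosSemidef) :
    hA.sqrt * hA.sqrt = A := by
  have hU := Unitary.star_mul_self_of_mem hA.1.eigenvectorUnitary.2
  conv_rhs => rw [hA.1.spectral_theorem, Unitary.conjStarAlgAut_apply]
  unfold Matrix.PosSemidef.sqrt
  generalize (hA.1.eigenvectorUnitary : Matrix k k ℝ) = U at hU ⊢
  rw [show ∀ D : Matrix k k ℝ, U * D * star U * (U * D * star U) = U * (D * D) * star U from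
    fun D => by rw [show U * D * star U * (U * D * star U) = U * D * (star U * U) * D * star U by
      simp only [Matrix.mul_assoc], hU, Matrix.mul_one, Matrix.mul_assoc U D D]]
  rw [diagonal_mul_diagonal]
  congr 2
  congr 1
  funext i
  simpa using Real.mul_self_sqrt (hA.eigenvalues_nonneg i)

lemma Matrix.PosSemidef.posSemidef_sqrt {A : Matrix k k ℝ} (hA : A.PosSemidef) :
    hA.sqrt.PosSemidef := by
  unfold Matrix.PosSemidef.sqrt
  simp only [Matrix.star_eq_conjTranspose]
  refine Matrix.PosSemidef.mul_mul_conjTranspose_same ?_ _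
  refine Matrix.PosSemidef.diagonal fun i => ?_
  simp [Real.sqrt_nonneg]

lemma dot_symm (A : Matrix k k ℝ) (hA : A.IsHermitian) (x y : k → ℝ) :
    x ⬝ᵥ A *ᵥ y = y ⬝ᵥ A *ᵥ x := by
  rw [Matrix.dotProduct_mulVec, ← Matrix.mulVec_transpose]
  have hAt : Aᵀ = A := by
    have := hA; rwa [Matrix.IsHermitian, Matrix.conjTranspose_eq_transpose_of_trivial] at this
  rw [hAt, dotProduct_comm]

lemma psd_cs (A : Matrix k k ℝ) (hA : A.PosSemidef) (x y : k → ℝ) :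
    (x ⬝ᵥ A *ᵥ y) ^ 2 ≤ (x ⬝ᵥ A *ᵥ x) * (y ⬝ᵥ A *ᵥ y) := by
  have expand : ∀ t : ℝ, (x + t • y) ⬝ᵥ A *ᵥ (x + t • y)
      = (x ⬝ᵥ A *ᵥ x) + t * (x ⬝ᵥ A *ᵥ y) + t * (y ⬝ᵥ A *ᵥ x) + t * t * (y ⬝ᵥ A *ᵥ y) := by
    intro t
    simp only [Matrix.mulVec_add, Matrix.mulVec_smul, add_dotProduct,
      dotProduct_add, dotProduct_smul, smul_dotProduct, smul_eq_mul]
    ring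
  have hsymm := dot_symm A hA.1 x y
  have key : ∀ t : ℝ, 0 ≤ (y ⬝ᵥ A *ᵥ y) * (t * t) + (2 * (x ⬝ᵥ A *ᵥ y)) * t + (x ⬝ᵥ A *ᵥ x) := by
    intro t
    have h0 := hA.dotProduct_mulVec_nonneg (x + t • y)
    rw [star_trivial, expand t, hsymm] at h0
    rw [hsymm]
    nlinarith [h0]
  have hd := discrim_le_zero key
  unfold discrim at hd
  nlinarith [hd]

lemma dot_self_nonneg (x : k → ℝ) : 0 ≤ x ⬝ᵥ x :=
  Finset.sum_nonneg fun i _ => mul_self_nonneg (x i)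

lemma sq_le_dot {l : Type*} [Fintype l] (x : l → ℝ) (i : l) : x i ^ 2 ≤ x ⬝ᵥ x := by
  have h : x ⬝ᵥ x = ∑ j, x j ^ 2 := by simp [dotProduct, sq]
  rw [h]
  exact Finset.single_le_sum (fun j _ => sq_nonneg (x j)) (Finset.mem_univ i)

lemma form_bound {l : Type*} [Fintype l] (B : Matrix k l ℝ) (x : k → ℝ) (y : l → ℝ)
    (ε : ℝ) (hε : 0 < ε) :
    |x ⬝ᵥ B *ᵥ y| ≤ (∑ i, ∑ j, |B i j|) * ((ε * (x ⬝ᵥ x) + (y ⬝ᵥ y) / ε) / 2) := by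
  have h1 : x ⬝ᵥ B *ᵥ y = ∑ i, ∑ j, x i * B i j * y j := by
    simp only [dotProduct, Matrix.mulVec, Finset.mul_sum]
    exact Finset.sum_congr rfl fun i _ => Finset.sum_congr rfl fun j _ => by ring
  rw [h1]
  set c : ℝ := (ε * (x ⬝ᵥ x) + (y ⬝ᵥ y) / ε) / 2 with hc
  have hterm : ∀ i j, |x i * B i j * y j| ≤ |B i j| * c := by
    intro i j
    have h2 : |x i * B i j * y j| = |B i j| * (|x i| * |y j|) := by
      rw [abs_mul, abs_mul]; ring
    rw [h2]
    have hxy : |x i| * |y j| ≤ c := by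
      have hx2 : x i ^ 2 ≤ x ⬝ᵥ x := sq_le_dot x i
      have hy2 : y j ^ 2 ≤ y ⬝ᵥ y := sq_le_dot y j
      have key : 2 * ε * (|x i| * |y j|) ≤ ε * ε * x i ^ 2 + y j ^ 2 := by
        nlinarith [sq_nonneg (ε * |x i| - |y j|), sq_abs (x i), sq_abs (y j)]
      rw [hc]
      have hq : (y ⬝ᵥ y) = (y ⬝ᵥ y) / ε * ε := (div_mul_cancel₀ _ (ne_of_gt hε)).symm
      nlinarith [key, hx2, hy2, hε, mul_pos hε hε]
    nlinarith [abs_nonneg (B i j), abs_nonneg (x i), abs_nonneg (y j),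
      mul_le_mul_of_nonneg_left hxy (abs_nonneg (B i j))]
  calc |∑ i, ∑ j, x i * B i j * y j| ≤ ∑ i, |∑ j, x i * B i j * y j| :=
        Finset.abs_sum_le_sum_abs _ _
    _ ≤ ∑ i, ∑ j, |x i * B i j * y j| :=
        Finset.sum_le_sum fun i _ => Finset.abs_sum_le_sum_abs _ _
    _ ≤ ∑ i, ∑ j, |B i j| * c :=
        Finset.sum_le_sum fun i _ => Finset.sum_le_sum fun j _ => hterm i j
    _ = (∑ i, ∑ j, |B i j|) * c := by rw [Finset.sum_mul]; congr 1; ext i; rw [Finset.sum_mul]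

lemma psd_mulVec_zero (A : Matrix k k ℝ) (hA : A.PosSemidef) (x : k → ℝ)
    (h : x ⬝ᵥ A *ᵥ x = 0) : A *ᵥ x = 0 := by
  funext i
  have := psd_cs A hA (Pi.single i 1) x
  rw [h, mul_zero] at this
  have h2 : (Pi.single i 1 : k → ℝ) ⬝ᵥ A *ᵥ x = (A *ᵥ x) i := by
    rw [single_dotProduct, one_mul]
  have h3 : ((A *ᵥ x) i) ^ 2 ≤ 0 := by rwa [h2] at this
  have := sq_nonneg ((A *ᵥ x) i)
  have : ((A *ᵥ x) i) ^ 2 = 0 := le_antisymm h3 this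
  simpa [sq, mul_self_eq_zero] using this

lemma posdef_lower (A : Matrix k k ℝ) (hA : A.PosDef) :
    ∃ c > 0, ∀ x : k → ℝ, c * (x ⬝ᵥ x) ≤ x ⬝ᵥ A *ᵥ x := by
  have hAinv : A⁻¹.PosDef := hA.inv
  set ρ : ℝ := (∑ i, ∑ j, |A⁻¹ i j|) + 1 with hρ
  clear_value ρ
  have hρpos : 0 < ρ := by
    have h0 : 0 ≤ ∑ i, ∑ j, |A⁻¹ i j| :=
      Finset.sum_nonneg fun i _ => Finset.sum_nonneg fun j _ => abs_nonneg _
    rw [hρ]; linarith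
  refine ⟨1 / ρ, by positivity, fun x => ?_⟩
  rcases eq_or_ne (x ⬝ᵥ x) 0 with hx | hx
  · rw [hx, mul_zero]
    have := hA.posSemidef.dotProduct_mulVec_nonneg x
    rwa [star_trivial] at this
  · have hxpos : 0 < x ⬝ᵥ x := lt_of_le_of_ne (dot_self_nonneg x) (Ne.symm hx)
    have hAA : A *ᵥ (A⁻¹ *ᵥ x) = x := by
      rw [Matrix.mulVec_mulVec, Matrix.mul_nonsing_inv _ (isUnit_iff_isUnit_det _ |>.1 hA.isUnit),
        Matrix.one_mulVec]
    have hcs := psd_cs A hA.posSemidef x (A⁻¹ *ᵥ x)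
    rw [hAA] at hcs
    have hsym : (A⁻¹ *ᵥ x) ⬝ᵥ x = x ⬝ᵥ A⁻¹ *ᵥ x := by
      rw [dotProduct_comm, dot_symm A⁻¹ hAinv.1]
    have hbound : x ⬝ᵥ A⁻¹ *ᵥ x ≤ (ρ - 1) * (x ⬝ᵥ x) := by
      have := form_bound A⁻¹ x x 1 one_pos
      have habs : x ⬝ᵥ A⁻¹ *ᵥ x ≤ |x ⬝ᵥ A⁻¹ *ᵥ x| := le_abs_self _
      rw [hρ]
      calc x ⬝ᵥ A⁻¹ *ᵥ x ≤ |x ⬝ᵥ A⁻¹ *ᵥ x| := habs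
        _ ≤ (∑ i, ∑ j, |A⁻¹ i j|) * ((1 * (x ⬝ᵥ x) + (x ⬝ᵥ x) / 1) / 2) := this
        _ = (∑ i, ∑ j, |A⁻¹ i j| + 1 - 1) * (x ⬝ᵥ x) := by ring_nf
    rw [hsym] at hcs
    have hApos : 0 ≤ x ⬝ᵥ A *ᵥ x := by have := hA.posSemidef.dotProduct_mulVec_nonneg x; rwa [star_trivial] at this
    rw [one_div, inv_mul_le_iff₀ hρpos]
    nlinarith [hcs, hbound, hxpos, hρpos, hApos,
      mul_le_mul_of_nonneg_left hbound hApos, mul_pos hxpos hxpos, mul_nonneg hApos hxpos.le]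

open RealInnerProductSpace in
lemma eig_sq_le (S T : Matrix k k ℝ) (hS : S.PosSemidef) (hT : T.PosSemidef) (β : ℝ)
    (hβ : 0 ≤ β)
    (h1 : ∀ v : k → ℝ, 0 ≤ v ⬝ᵥ (S * S - T * T) *ᵥ v)
    (h2 : ∀ v : k → ℝ, v ⬝ᵥ (S * S - T * T) *ᵥ v ≤ β * (v ⬝ᵥ v))
    (hC : (S - T).IsHermitian) : ∀ j, (hC.eigenvalues j) ^ 2 ≤ β := by
  intro j
  set v : k → ℝ := ⇑(hC.eigenvectorBasis j) with hvdef
  set lam : ℝ := hC.eigenvalues j with hlam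
  have hv : (S - T) *ᵥ v = lam • v := hC.mulVec_eigenvectorBasis j
  have hvv : v ⬝ᵥ v = 1 := by
    have hnorm : ‖hC.eigenvectorBasis j‖ = 1 := hC.eigenvectorBasis.orthonormal.1 j
    have hinner : ⟪hC.eigenvectorBasis j, hC.eigenvectorBasis j⟫ = (1 : ℝ) := by
      rw [real_inner_self_eq_norm_sq, hnorm]; norm_num
    rw [PiLp.inner_apply] at hinner
    simpa [dotProduct, hvdef, sq] using hinner
  set a : ℝ := v ⬝ᵥ S *ᵥ v with ha'
  set b : ℝ := v ⬝ᵥ T *ᵥ v with hb'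
  have ha : 0 ≤ a := by have := hS.dotProduct_mulVec_nonneg v; rwa [star_trivial] at this
  have hb : 0 ≤ b := by have := hT.dotProduct_mulVec_nonneg v; rwa [star_trivial] at this
  have hsplit : S * S - T * T = S * (S - T) + (S - T) * T := by noncomm_ring
  have e1 : v ⬝ᵥ (S * S - T * T) *ᵥ v = lam * (a + b) := by
    rw [hsplit, Matrix.add_mulVec, dotProduct_add, ← Matrix.mulVec_mulVec,
      ← Matrix.mulVec_mulVec, hv, Matrix.mulVec_smul, dotProduct_smul]
    have hswap : v ⬝ᵥ (S - T) *ᵥ (T *ᵥ v) = (T *ᵥ v) ⬝ᵥ (S - T) *ᵥ v :=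
      dot_symm _ hC v (T *ᵥ v)
    rw [hswap, hv, dotProduct_smul]
    have hTs : (T *ᵥ v) ⬝ᵥ v = b := dotProduct_comm _ _
    rw [hTs]
    simp only [smul_eq_mul]
    ring
  have e2 : a - b = lam := by
    have hh : v ⬝ᵥ (S - T) *ᵥ v = lam * (v ⬝ᵥ v) := by
      rw [hv, dotProduct_smul]; simp [smul_eq_mul]
    rw [hvv, mul_one] at hh
    rw [← hh, Matrix.sub_mulVec, dotProduct_sub]
  have h1v := h1 v
  have h2v := h2 v
  rw [e1] at h1v h2v
  rw [hvv, mul_one] at h2v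
  rw [← e2]
  rcases le_total b a with hab | hab
  · nlinarith [h1v, h2v, ha, hb]
  · nlinarith [h1v, h2v, ha, hb]

lemma herm_entry_bound (C : Matrix k k ℝ) (hC : C.IsHermitian) (β : ℝ) (hβ : 0 ≤ β)
    (hev : ∀ x, (hC.eigenvalues x) ^ 2 ≤ β) : ∀ i j, |C i j| ≤ Real.sqrt β := by
  intro i j
  set U : Matrix k k ℝ := (Matrix.IsHermitian.eigenvectorUnitary hC : Matrix k k ℝ) with hU
  have hspec := hC.spectral_theorem
  have hentry : C i j = ∑ x, hC.eigenvalues x * (U i x * U j x) := by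
    conv_lhs => rw [hspec, Unitary.conjStarAlgAut_apply]
    rw [Matrix.mul_apply]
    rw [Finset.sum_congr rfl (fun x _ => by rw [Matrix.mul_diagonal])]
    simp only [Function.comp_apply, Matrix.star_apply, star_trivial]
    exact Finset.sum_congr rfl fun x _ => by
      simp only [RCLike.ofReal_real_eq_id, id_eq]; ring
  have hrow : ∀ r : k, ∑ x, U r x * U r x = 1 := by
    intro r
    have hUU : U * star U = 1 := by
      have h2 := (Matrix.IsHermitian.eigenvectorUnitary hC).2
      rw [Matrix.mem_unitaryGroup_iff] at h2
      exact h2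
    have h3 := congrArg (fun M => M r r) hUU
    simp only [Matrix.mul_apply, Matrix.star_apply, star_trivial, Matrix.one_apply_eq] at h3
    exact h3
  have hcs : (∑ x, |U i x| * |U j x|) ^ 2 ≤ 1 := by
    have hcs0 := Finset.sum_mul_sq_le_sq_mul_sq Finset.univ (fun x => |U i x|) (fun x => |U j x|)
    have hi : ∑ x, |U i x| ^ 2 = 1 := by
      rw [← hrow i]; exact Finset.sum_congr rfl fun x _ => by rw [sq_abs, sq]
    have hj : ∑ x, |U j x| ^ 2 = 1 := by
      rw [← hrow j]; exact Finset.sum_congr rfl fun x _ => by rw [sq_abs, sq]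
    calc (∑ x, |U i x| * |U j x|) ^ 2 ≤ (∑ x, |U i x| ^ 2) * (∑ x, |U j x| ^ 2) := hcs0
      _ = 1 := by rw [hi, hj, one_mul]
  have hcs' : ∑ x, |U i x| * |U j x| ≤ 1 := by
    have hnn : 0 ≤ ∑ x, |U i x| * |U j x| :=
      Finset.sum_nonneg fun x _ => mul_nonneg (abs_nonneg _) (abs_nonneg _)
    nlinarith [hcs, hnn]
  have hev' : ∀ x, |hC.eigenvalues x| ≤ Real.sqrt β := fun x =>
    Real.abs_le_sqrt (hev x)
  rw [hentry]
  calc |∑ x, hC.eigenvalues x * (U i x * U j x)|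
      ≤ ∑ x, |hC.eigenvalues x * (U i x * U j x)| := Finset.abs_sum_le_sum_abs _ _
    _ ≤ ∑ x, Real.sqrt β * (|U i x| * |U j x|) := by
        refine Finset.sum_le_sum fun x _ => ?_
        rw [abs_mul, abs_mul]
        exact mul_le_mul_of_nonneg_right (hev' x) (mul_nonneg (abs_nonneg _) (abs_nonneg _))
    _ = Real.sqrt β * ∑ x, |U i x| * |U j x| := by rw [Finset.mul_sum]
    _ ≤ Real.sqrt β * 1 := mul_le_mul_of_nonneg_left hcs' (Real.sqrt_nonneg _)
    _ = Real.sqrt β := mul_one _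

lemma psd_isUnit_posDef (A : Matrix k k ℝ) (hA : A.PosSemidef) (h : IsUnit A.det) :
    A.PosDef := by
  refine Matrix.PosDef.of_dotProduct_mulVec_pos hA.1 fun x hx => ?_
  rw [star_trivial]
  rcases lt_or_eq_of_le (by have := hA.dotProduct_mulVec_nonneg x; rwa [star_trivial] at this : 0 ≤ x ⬝ᵥ A *ᵥ x)
    with hlt | heq
  · exact hlt
  · exfalso
    have hz : A *ᵥ x = 0 := psd_mulVec_zero A hA x heq.symm
    have : x = 0 := by
      have h1 : A⁻¹ *ᵥ (A *ᵥ x) = x := by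
        rw [Matrix.mulVec_mulVec, Matrix.nonsing_inv_mul _ h, Matrix.one_mulVec]
      rw [hz, Matrix.mulVec_zero] at h1
      exact h1.symm
    exact hx this

lemma sqrt_posDef {A : Matrix k k ℝ} (hA : A.PosDef) : (hA.posSemidef.sqrt).PosDef := by
  refine psd_isUnit_posDef _ hA.posSemidef.posSemidef_sqrt ?_
  have hdet : hA.posSemidef.sqrt.det * hA.posSemidef.sqrt.det = A.det := by
    rw [← Matrix.det_mul, hA.posSemidef.sqrt_mul_self]
  have hu : IsUnit (hA.posSemidef.sqrt.det * hA.posSemidef.sqrt.det) := by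
    rw [hdet]; exact hA.det_pos.ne'.isUnit
  exact isUnit_of_mul_isUnit_left hu

lemma dot_conj {l : Type*} [Fintype l] (X : Matrix k k ℝ) (B : Matrix k l ℝ) (v : l → ℝ) :
    v ⬝ᵥ (Bᵀ * X * B) *ᵥ v = (B *ᵥ v) ⬝ᵥ X *ᵥ (B *ᵥ v) := by
  rw [show Bᵀ * X * B = Bᵀ * (X * B) from Matrix.mul_assoc _ _ _, ← Matrix.mulVec_mulVec,
    Matrix.dotProduct_mulVec, Matrix.vecMul_transpose, ← Matrix.mulVec_mulVec]

lemma dot_sq_self {l : Type*} [Fintype l] (B : Matrix k l ℝ) (v : l → ℝ) :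
    (B *ᵥ v) ⬝ᵥ (B *ᵥ v) = v ⬝ᵥ (Bᵀ * B) *ᵥ v := by
  have := dot_conj (1 : Matrix k k ℝ) B v
  rw [Matrix.mul_one, Matrix.one_mulVec] at this
  exact this.symm

lemma dot_amgm (x y : k → ℝ) (a : ℝ) (ha : 0 < a) :
    |x ⬝ᵥ y| ≤ (a * (x ⬝ᵥ x) + (y ⬝ᵥ y) / a) / 2 := by
  have hterm : ∀ i, |x i * y i| ≤ (a * (x i * x i) + (y i * y i) / a) / 2 := by
    intro i
    rw [abs_mul]
    have key : (2 * (|x i| * |y i|)) * a ≤ (a * (x i * x i) + y i * y i / a) * a := by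
      have h1 := sq_nonneg (a * |x i| - |y i|)
      have h2 : |x i| * |x i| = x i * x i := abs_mul_abs_self _
      have h3 : |y i| * |y i| = y i * y i := abs_mul_abs_self _
      have h4 : y i * y i / a * a = y i * y i := div_mul_cancel₀ _ (ne_of_gt ha)
      have h5 : a ^ 2 * (|x i| * |x i|) = a ^ 2 * (x i * x i) := by rw [h2]
      nlinarith [h1, h3, h4, h5, ha]
    have key2 := le_of_mul_le_mul_right key ha
    linarith
  calc |x ⬝ᵥ y| ≤ ∑ i, |x i * y i| := Finset.abs_sum_le_sum_abs _ _
    _ ≤ ∑ i, (a * (x i * x i) + (y i * y i) / a) / 2 := Finset.sum_le_sum fun i _ => hterm i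
    _ = (a * (x ⬝ᵥ x) + (y ⬝ᵥ y) / a) / 2 := by
        rw [dotProduct, dotProduct, Finset.mul_sum, Finset.sum_div,
          ← Finset.sum_add_distrib, ← Finset.sum_div]


lemma arith1 (μ₀ δ₀ ε cR m qq pp qN pR pq qR : ℝ) (hε : 0 < ε) (hμ : 0 < μ₀) (hδ : 0 < δ₀)
    (hcR : 0 ≤ cR) (hm : 0 ≤ m) (hqq : 0 ≤ qq) (hpp : 0 ≤ pp)
    (h1 : μ₀ * qq ≤ qN) (h2 : δ₀ * pp ≤ pR) (h3 : 2 * ε * |pq| ≤ cR * (ε ^ 2 * pp + qq))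
    (h4 : |qR| ≤ cR * qq) (h5 : 2 * cR + 2 * ε * cR ≤ m * (ε * μ₀)) (h6 : cR * ε ≤ δ₀) :
    (m * μ₀ / 2) * qq ≤ m * qN + pR + 2 * pq + qR := by
  have mA1 : m * (μ₀ * qq) ≤ m * qN := mul_le_mul_of_nonneg_left h1 hm
  have L1 : ε * (m * (μ₀ * qq)) ≤ ε * (m * qN) := mul_le_mul_of_nonneg_left mA1 hε.le
  have L2 : ε * (δ₀ * pp) ≤ ε * pR := mul_le_mul_of_nonneg_left h2 hε.le
  have L3 : ε * (-|pq|) ≤ ε * pq := mul_le_mul_of_nonneg_left (neg_abs_le pq) hε.le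
  have L4 : ε * (-|qR|) ≤ ε * qR := mul_le_mul_of_nonneg_left (neg_abs_le qR) hε.le
  have L8 : ε * |qR| ≤ ε * (cR * qq) := mul_le_mul_of_nonneg_left h4 hε.le
  have L6 : (2 * cR + 2 * ε * cR) * qq ≤ (m * (ε * μ₀)) * qq :=
    mul_le_mul_of_nonneg_right h5 hqq
  have L7 : (cR * ε) * (ε * pp) ≤ δ₀ * (ε * pp) :=
    mul_le_mul_of_nonneg_right h6 (mul_nonneg hε.le hpp)
  have key : ε * ((m * μ₀ / 2) * qq) ≤ ε * (m * qN + pR + 2 * pq + qR) := by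
    nlinarith [L1, L2, L3, L4, L6, L7, L8, h3]
  exact le_of_mul_le_mul_left key hε

lemma arith2 (A qq zz G : ℝ) (hG : 0 < G) (hzz : 0 ≤ zz) (hqq : 0 ≤ qq)
    (h1 : G / 2 * qq ≤ A) (h2 : A ≤ (G / 4 * qq + zz / (G / 4)) / 2) : A ≤ 3 / G * zz := by
  have h4 : zz / (G / 4) = 4 * (zz / G) := by
    rw [div_div_eq_mul_div]; ring
  have hu : 0 ≤ zz / G := div_nonneg hzz hG.le
  have h3g : 3 / G * zz = 3 * (zz / G) := by ring
  rw [h4] at h2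
  rw [h3g]
  linarith

end Helpers

section NormHelpers

lemma norm_le_card_mul {k l : Type*} [Fintype k] [Fintype l] (A : Matrix k l ℝ) (b : ℝ)
    (hb : 0 ≤ b) (h : ∀ i j, |A i j| ≤ b) : ‖A‖ ≤ (Fintype.card l : ℝ) * b := by
  rw [Matrix.linfty_opNorm_def]
  set B : NNReal := ⟨b, hb⟩ with hB
  have hsup : (Finset.univ.sup fun i => ∑ j, ‖A i j‖₊) ≤ Fintype.card l • B := by
    refine Finset.sup_le fun i _ => ?_
    calc ∑ j, ‖A i j‖₊ ≤ ∑ _j : l, B := by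
          refine Finset.sum_le_sum fun j _ => ?_
          rw [← NNReal.coe_le_coe, coe_nnnorm, Real.norm_eq_abs]
          exact h i j
      _ = Fintype.card l • B := by rw [Finset.sum_const, Finset.card_univ]
  have := NNReal.coe_le_coe.2 hsup
  rw [NNReal.coe_nsmul] at this
  rwa [nsmul_eq_mul] at this

end NormHelpers

set_option maxHeartbeats 1000000 in
/-- If `K m = m • N + R` is SPD, `N` symmetric PSD with 3-dimensional kernel `range e`
(`e` with orthonormal columns), `R` symmetric and `η = eᵀ R e` SPD, then the inverse of the
principal square root satisfies `K(m)^{-1/2} = e η^{-1/2} eᵀ + O(m^{-1/2})`. -/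
theorem stmt5 (n : ℕ) (N R : Matrix (Fin n) (Fin n) ℝ)
    (e : Matrix (Fin n) (Fin 3) ℝ)
    (hN : N.PosSemidef)
    (he : eᵀ * e = 1)
    (hker : ∀ x : Fin n → ℝ, N.mulVec x = 0 ↔ ∃ c : Fin 3 → ℝ, x = e.mulVec c)
    (hR : R.IsSymm)
    (K : ℝ → Matrix (Fin n) (Fin n) ℝ)
    (hK : ∀ m : ℝ, K m = m • N + R)
    (hKpd : ∀ m : ℝ, 1 ≤ m → (K m).PosDef)
    (η : Matrix (Fin 3) (Fin 3) ℝ) (hη : η = eᵀ * R * e)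
    (hηpd : η.PosDef) :
    ∃ C > 0, ∃ m₀ > 0, ∀ m : ℝ, ∀ hm : 1 ≤ m, m₀ ≤ m →
      ‖((hKpd m hm).posSemidef.sqrt)⁻¹ - e * (hηpd.posSemidef.sqrt)⁻¹ * eᵀ‖
        ≤ C / Real.sqrt m := by
    classical
  have hRh : R.IsHermitian := by
    rw [Matrix.IsHermitian, Matrix.conjTranspose_eq_transpose_of_trivial]; exact hR
  have hNt : Nᵀ = N := by
    have h := hN.1
    rwa [Matrix.IsHermitian, Matrix.conjTranspose_eq_transpose_of_trivial] at h
  have hNe : ∀ c : Fin 3 → ℝ, N *ᵥ (e *ᵥ c) = 0 := fun c => (hker _).2 ⟨c, rfl⟩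
  have heN : N * e = 0 := by
    ext i j
    have h := congrFun (hNe (Pi.single j 1)) i
    simp only [Matrix.mulVec_single, mul_one] at h
    rw [Matrix.mul_apply, Matrix.zero_apply]
    simpa [Matrix.mulVec, dotProduct] using h
  have hηt : ηᵀ = η := by
    rw [hη]; simp [Matrix.transpose_mul, Matrix.mul_assoc, hR.eq]
  have hηdet : IsUnit η.det := (Matrix.isUnit_iff_isUnit_det _).1 hηpd.isUnit
  have hηinv : η * η⁻¹ = 1 := Matrix.mul_nonsing_inv _ hηdet
  have hηinvt : (η⁻¹)ᵀ = η⁻¹ := by rw [Matrix.transpose_nonsing_inv, hηt]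
  set MM : Matrix (Fin n) (Fin n) ℝ := 1 - R * e * η⁻¹ * eᵀ with hMM
  have heM : eᵀ * MM = 0 := by
    rw [hMM, Matrix.mul_sub, Matrix.mul_one]
    have h1 : eᵀ * (R * e * η⁻¹ * eᵀ) = (eᵀ * R * e) * (η⁻¹ * eᵀ) := by
      simp only [Matrix.mul_assoc]
    rw [h1, ← hη, ← Matrix.mul_assoc, hηinv, Matrix.one_mul, sub_self]
  have hMe : MMᵀ * e = 0 := by
    have h := congrArg Matrix.transpose heM
    rwa [Matrix.transpose_mul, Matrix.transpose_transpose, Matrix.transpose_zero] at h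
  obtain ⟨δ₀, hδ₀, hδb⟩ := posdef_lower η hηpd
  have hPq : ∀ x : Fin n → ℝ, x ⬝ᵥ (e * eᵀ) *ᵥ x = (eᵀ *ᵥ x) ⬝ᵥ (eᵀ *ᵥ x) := by
    intro x
    rw [dot_sq_self eᵀ x, Matrix.transpose_transpose]
  have hNPpd : (N + e * eᵀ).PosDef := by
    refine Matrix.PosDef.of_dotProduct_mulVec_pos ?_ ?_
    · rw [Matrix.IsHermitian, Matrix.conjTranspose_eq_transpose_of_trivial,
        Matrix.transpose_add, hNt, Matrix.transpose_mul, Matrix.transpose_transpose]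
    · intro x hx
      rw [star_trivial, Matrix.add_mulVec, dotProduct_add]
      have hN0 : 0 ≤ x ⬝ᵥ N *ᵥ x := by have := hN.dotProduct_mulVec_nonneg x; rwa [star_trivial] at this
      have hP0 : 0 ≤ x ⬝ᵥ (e * eᵀ) *ᵥ x := by rw [hPq]; exact dot_self_nonneg _
      rcases lt_or_eq_of_le hN0 with h | h
      · linarith
      · have hNx : N *ᵥ x = 0 := psd_mulVec_zero N hN x h.symm
        obtain ⟨c, hc⟩ := (hker x).1 hNx
        have hcx : eᵀ *ᵥ x = c := by rw [hc, Matrix.mulVec_mulVec, he, Matrix.one_mulVec]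
        have hcne : c ≠ 0 := by
          rintro rfl; exact hx (by rw [hc, Matrix.mulVec_zero])
        have hcc : 0 < (eᵀ *ᵥ x) ⬝ᵥ (eᵀ *ᵥ x) := by
          rw [hcx]
          refine lt_of_le_of_ne (dot_self_nonneg c) fun h0 => hcne ?_
          exact dotProduct_self_eq_zero.1 h0.symm
        rw [← hPq] at hcc; linarith
  obtain ⟨μ₀, hμ₀, hμb⟩ := posdef_lower (N + e * eᵀ) hNPpd
  set cR : ℝ := (∑ i, ∑ j, |R i j|) + 1 with hcRdef
  have hcR1 : 1 ≤ cR := by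
    have h0 : 0 ≤ ∑ i, ∑ j, |R i j| :=
      Finset.sum_nonneg fun i _ => Finset.sum_nonneg fun j _ => abs_nonneg _
    rw [hcRdef]; linarith
  have hcRpos : 0 < cR := lt_of_lt_of_le one_pos hcR1
  have hcRb : ∀ (x y : Fin n → ℝ) (ε' : ℝ), 0 < ε' →
      2 * ε' * |x ⬝ᵥ R *ᵥ y| ≤ cR * (ε' ^ 2 * (x ⬝ᵥ x) + (y ⬝ᵥ y)) := by
    intro x y ε' hε'
    have h1 := form_bound R x y ε' hε'
    have hfac : 0 ≤ (ε' * (x ⬝ᵥ x) + (y ⬝ᵥ y) / ε') / 2 := by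
      apply div_nonneg _ (by norm_num)
      exact add_nonneg (mul_nonneg hε'.le (dot_self_nonneg x))
        (div_nonneg (dot_self_nonneg y) hε'.le)
    have hsig : (∑ i, ∑ j, |R i j|) ≤ cR := by rw [hcRdef]; linarith
    have h2 : |x ⬝ᵥ R *ᵥ y| ≤ cR * ((ε' * (x ⬝ᵥ x) + (y ⬝ᵥ y) / ε') / 2) :=
      le_trans h1 (mul_le_mul_of_nonneg_right hsig hfac)
    calc 2 * ε' * |x ⬝ᵥ R *ᵥ y| ≤ 2 * ε' * (cR * ((ε' * (x ⬝ᵥ x) + (y ⬝ᵥ y) / ε') / 2)) := by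
          apply mul_le_mul_of_nonneg_left h2; positivity
      _ = cR * (ε' ^ 2 * (x ⬝ᵥ x) + (y ⬝ᵥ y)) := by field_simp
  set ε : ℝ := δ₀ / (2 * cR) with hεdef
  have hε : 0 < ε := by rw [hεdef]; positivity
  have hcRε : cR * ε ≤ δ₀ := by
    have heq : cR * ε = δ₀ / 2 := by rw [hεdef]; field_simp
    rw [heq]; linarith
  set cM : ℝ := (∑ i, ∑ j, |(MMᵀ * MM) i j|) + 1 with hcMdef
  have hcMpos : 0 < cM := by
    have h0 : 0 ≤ ∑ i, ∑ j, |(MMᵀ * MM) i j| :=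
      Finset.sum_nonneg fun i _ => Finset.sum_nonneg fun j _ => abs_nonneg _
    rw [hcMdef]; linarith
  have hMMb : ∀ v : Fin n → ℝ, (MM *ᵥ v) ⬝ᵥ (MM *ᵥ v) ≤ cM * (v ⬝ᵥ v) := by
    intro v
    rw [dot_sq_self]
    have h1 := form_bound (MMᵀ * MM) v v 1 one_pos
    have h3 : ((1 * (v ⬝ᵥ v) + (v ⬝ᵥ v) / 1) / 2) = v ⬝ᵥ v := by rw [one_mul, div_one]; ring
    rw [h3] at h1
    have hsig : (∑ i, ∑ j, |(MMᵀ * MM) i j|) ≤ cM := by rw [hcMdef]; linarith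
    calc v ⬝ᵥ (MMᵀ * MM) *ᵥ v ≤ |v ⬝ᵥ (MMᵀ * MM) *ᵥ v| := le_abs_self _
      _ ≤ (∑ i, ∑ j, |(MMᵀ * MM) i j|) * (v ⬝ᵥ v) := h1
      _ ≤ cM * (v ⬝ᵥ v) := mul_le_mul_of_nonneg_right hsig (dot_self_nonneg v)
  refine ⟨(n : ℝ) * Real.sqrt (3 * cM / μ₀) + 1, by positivity,
    max 1 ((2 * cR + 2 * ε * cR) / (ε * μ₀) + 1), lt_of_lt_of_le one_pos (le_max_left _ _),
    fun m hm hm0 => ?_⟩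
  have hm1 : (1 : ℝ) ≤ m := hm
  have hmpos : 0 < m := lt_of_lt_of_le one_pos hm
  have hmcond : 2 * cR + 2 * ε * cR ≤ m * (ε * μ₀) := by
    have h1 : (2 * cR + 2 * ε * cR) / (ε * μ₀) + 1 ≤ m := le_trans (le_max_right _ _) hm0
    have h2 : (2 * cR + 2 * ε * cR) / (ε * μ₀) ≤ m := by linarith
    exact (div_le_iff₀ (by positivity)).1 h2
  -- per-m facts
  have hKm := hKpd m hm
  have hKdet : IsUnit (K m).det := (Matrix.isUnit_iff_isUnit_det _).1 hKm.isUnit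
  have hKt : (K m)ᵀ = K m := by
    rw [hK]; simp [Matrix.transpose_add, Matrix.transpose_smul, hNt, hR.eq]
  have hKit : ((K m)⁻¹)ᵀ = (K m)⁻¹ := by rw [Matrix.transpose_nonsing_inv, hKt]
  have hKipd : ((K m)⁻¹).PosDef := hKm.inv
  set S := ((hKpd m hm).posSemidef.sqrt)⁻¹ with hSdef
  set T := e * (hηpd.posSemidef.sqrt)⁻¹ * eᵀ with hTdef
  have hsqKpd : ((hKpd m hm).posSemidef.sqrt).PosDef := sqrt_posDef (hKpd m hm)
  have hSpd : S.PosDef := hsqKpd.inv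
  have hSS : S * S = (K m)⁻¹ := by
    rw [hSdef, ← Matrix.mul_inv_rev, (hKpd m hm).posSemidef.sqrt_mul_self]
  have hsqηpd : ((hηpd.posSemidef).sqrt).PosDef := sqrt_posDef hηpd
  have hWpd : ((hηpd.posSemidef).sqrt)⁻¹.PosDef := hsqηpd.inv
  have hWW : ((hηpd.posSemidef).sqrt)⁻¹ * ((hηpd.posSemidef).sqrt)⁻¹ = η⁻¹ := by
    rw [← Matrix.mul_inv_rev, (hηpd.posSemidef).sqrt_mul_self]
  have hTT : T * T = e * η⁻¹ * eᵀ := by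
    rw [hTdef]
    calc e * (hηpd.posSemidef).sqrt⁻¹ * eᵀ * (e * (hηpd.posSemidef).sqrt⁻¹ * eᵀ)
        = e * (hηpd.posSemidef).sqrt⁻¹ * (eᵀ * e) * (hηpd.posSemidef).sqrt⁻¹ * eᵀ := by
          simp only [Matrix.mul_assoc]
      _ = e * ((hηpd.posSemidef).sqrt⁻¹ * (hηpd.posSemidef).sqrt⁻¹) * eᵀ := by
          rw [he, Matrix.mul_one, Matrix.mul_assoc e]
      _ = e * η⁻¹ * eᵀ := by rw [hWW]
  have hSh : S.IsHermitian := hSpd.1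
  have hWt : ((hηpd.posSemidef).sqrt⁻¹)ᵀ = (hηpd.posSemidef).sqrt⁻¹ := by
    have h := hWpd.1
    rwa [Matrix.IsHermitian, Matrix.conjTranspose_eq_transpose_of_trivial] at h
  have hTh : T.IsHermitian := by
    rw [Matrix.IsHermitian, Matrix.conjTranspose_eq_transpose_of_trivial, hTdef]
    simp [Matrix.transpose_mul, Matrix.transpose_transpose, hWt, Matrix.mul_assoc]
  have hCh : (S - T).IsHermitian := hSh.sub hTh
  have hSpsd : S.PosSemidef := hSpd.posSemidef
  have hTpsd : T.PosSemidef := by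
    have h := Matrix.PosSemidef.mul_mul_conjTranspose_same hWpd.posSemidef e
    rwa [Matrix.conjTranspose_eq_transpose_of_trivial] at h
  -- algebraic identities
  have hKe : K m * e = R * e := by
    rw [hK, Matrix.add_mul, Matrix.smul_mul, heN, smul_zero, zero_add]
  have hKMeq : K m * (e * η⁻¹ * eᵀ) = 1 - MM := by
    have h1 : K m * (e * η⁻¹ * eᵀ) = (K m * e) * η⁻¹ * eᵀ := by simp only [Matrix.mul_assoc]
    rw [h1, hKe, hMM, sub_sub_cancel]
  have hDKM : (K m)⁻¹ - e * η⁻¹ * eᵀ = (K m)⁻¹ * MM := by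
    have h1 : (K m)⁻¹ * (K m * (e * η⁻¹ * eᵀ)) = e * η⁻¹ * eᵀ := by
      rw [← Matrix.mul_assoc, Matrix.nonsing_inv_mul _ hKdet, Matrix.one_mul]
    rw [hKMeq, Matrix.mul_sub, Matrix.mul_one] at h1
    rw [← h1, sub_sub_cancel]
  have hEt : (e * η⁻¹ * eᵀ)ᵀ = e * η⁻¹ * eᵀ := by
    simp [Matrix.transpose_mul, Matrix.transpose_transpose, hηinvt, Matrix.mul_assoc]
  have hMKin : MMᵀ * (K m)⁻¹ = (K m)⁻¹ * MM := by
    have h1 : ((K m)⁻¹ * MM)ᵀ = MMᵀ * (K m)⁻¹ := by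
      rw [Matrix.transpose_mul, hKit]
    rw [← h1, ← hDKM, Matrix.transpose_sub, hKit, hEt, hDKM]
  have hDmat : S * S - T * T = MMᵀ * (K m)⁻¹ * MM := by
    rw [hSS, hTT]
    have h2 : MMᵀ * (K m)⁻¹ * MM = (K m)⁻¹ * MM := by
      calc MMᵀ * (K m)⁻¹ * MM = MMᵀ * ((K m)⁻¹ * MM) := Matrix.mul_assoc _ _ _
        _ = MMᵀ * ((K m)⁻¹ - e * η⁻¹ * eᵀ) := by rw [hDKM]
        _ = MMᵀ * (K m)⁻¹ - MMᵀ * (e * η⁻¹ * eᵀ) := Matrix.mul_sub _ _ _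
        _ = MMᵀ * (K m)⁻¹ - (MMᵀ * e) * (η⁻¹ * eᵀ) := by simp only [Matrix.mul_assoc]
        _ = MMᵀ * (K m)⁻¹ := by rw [hMe, Matrix.zero_mul, sub_zero]
        _ = (K m)⁻¹ * MM := hMKin
    rw [h2, hDKM]
  -- quadratic lower bound for K
  have hlow : ∀ y : Fin n → ℝ,
      (m * μ₀ / 2) * ((y - e *ᵥ (eᵀ *ᵥ y)) ⬝ᵥ (y - e *ᵥ (eᵀ *ᵥ y))) ≤ y ⬝ᵥ (K m) *ᵥ y := by
    intro y
    set cv := eᵀ *ᵥ y with hcv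
    set p := e *ᵥ cv with hp
    set q := y - p with hqdef
    have hyq : y = p + q := by rw [hqdef]; abel
    have hep : eᵀ *ᵥ p = cv := by rw [hp, Matrix.mulVec_mulVec, he, Matrix.one_mulVec]
    have hqe : eᵀ *ᵥ q = 0 := by rw [hqdef, Matrix.mulVec_sub, hep, hcv, sub_self]
    have hNp : N *ᵥ p = 0 := hNe cv
    have hyN : y ⬝ᵥ N *ᵥ y = q ⬝ᵥ N *ᵥ q := by
      have hNy : N *ᵥ y = N *ᵥ q := by
        calc N *ᵥ y = N *ᵥ (p + q) := by rw [← hyq]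
          _ = N *ᵥ q := by rw [Matrix.mulVec_add, hNp, zero_add]
      rw [hNy]
      calc y ⬝ᵥ N *ᵥ q = (p + q) ⬝ᵥ N *ᵥ q := by rw [← hyq]
        _ = p ⬝ᵥ N *ᵥ q + q ⬝ᵥ N *ᵥ q := add_dotProduct _ _ _
        _ = q ⬝ᵥ N *ᵥ q := by
            rw [dot_symm N hN.1 p q, hNp, dotProduct_zero, zero_add]
    have hqN : μ₀ * (q ⬝ᵥ q) ≤ q ⬝ᵥ N *ᵥ q := by
      have h := hμb q
      rwa [Matrix.add_mulVec, dotProduct_add, hPq q, hqe, zero_dotProduct,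
        add_zero] at h
    have hpp : p ⬝ᵥ p = cv ⬝ᵥ cv := by
      rw [hp, dot_sq_self e cv, he, Matrix.one_mulVec]
    have hpR : δ₀ * (p ⬝ᵥ p) ≤ p ⬝ᵥ R *ᵥ p := by
      have h := hδb cv
      have h2 : cv ⬝ᵥ η *ᵥ cv = p ⬝ᵥ R *ᵥ p := by
        rw [hη, dot_conj R e cv, ← hp]
      rw [h2] at h
      rw [hpp]
      exact h
    have hyR : y ⬝ᵥ R *ᵥ y = p ⬝ᵥ R *ᵥ p + 2 * (p ⬝ᵥ R *ᵥ q) + q ⬝ᵥ R *ᵥ q := by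
      calc y ⬝ᵥ R *ᵥ y = (p + q) ⬝ᵥ R *ᵥ (p + q) := by rw [← hyq]
        _ = p ⬝ᵥ R *ᵥ p + 2 * (p ⬝ᵥ R *ᵥ q) + q ⬝ᵥ R *ᵥ q := by
            rw [Matrix.mulVec_add, add_dotProduct, dotProduct_add,
              dotProduct_add, dot_symm R hRh q p]
            ring
    have hyK : y ⬝ᵥ (K m) *ᵥ y
        = m * (q ⬝ᵥ N *ᵥ q) + (p ⬝ᵥ R *ᵥ p + 2 * (p ⬝ᵥ R *ᵥ q) + q ⬝ᵥ R *ᵥ q) := by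
      rw [hK, Matrix.add_mulVec, dotProduct_add, Matrix.smul_mulVec,
        dotProduct_smul, smul_eq_mul, hyN, hyR]
    have hqRq : |q ⬝ᵥ R *ᵥ q| ≤ cR * (q ⬝ᵥ q) := by
      have h := hcRb q q 1 one_pos
      rw [one_pow, one_mul] at h
      linarith
    have harith := arith1 μ₀ δ₀ ε cR m (q ⬝ᵥ q) (p ⬝ᵥ p) (q ⬝ᵥ N *ᵥ q) (p ⬝ᵥ R *ᵥ p)
      (p ⬝ᵥ R *ᵥ q) (q ⬝ᵥ R *ᵥ q) hε hμ₀ hδ₀ hcRpos.le (by linarith) (dot_self_nonneg q)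
      (dot_self_nonneg p) hqN hpR (hcRb p q ε hε) hqRq hmcond hcRε
    rw [hyK]
    linarith
  -- decay bound for the inverse on the orthogonal complement
  have hKinvb : ∀ z : Fin n → ℝ, eᵀ *ᵥ z = 0 →
      z ⬝ᵥ (K m)⁻¹ *ᵥ z ≤ 3 / (m * μ₀) * (z ⬝ᵥ z) := by
    intro z hz
    set w := (K m)⁻¹ *ᵥ z with hw
    have hKw : (K m) *ᵥ w = z := by
      rw [hw, Matrix.mulVec_mulVec, Matrix.mul_nonsing_inv _ hKdet, Matrix.one_mulVec]
    have hA1 : z ⬝ᵥ w = w ⬝ᵥ (K m) *ᵥ w := by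
      conv_lhs => rw [← hKw]
      rw [dotProduct_comm]
    have hzp : z ⬝ᵥ w = z ⬝ᵥ (w - e *ᵥ (eᵀ *ᵥ w)) := by
      rw [dotProduct_sub, Matrix.dotProduct_mulVec z e, ← Matrix.mulVec_transpose,
        hz, zero_dotProduct, sub_zero]
    have hlw := hlow w
    have hAKin : z ⬝ᵥ (K m)⁻¹ *ᵥ z = z ⬝ᵥ w := by rw [hw]
    have hGpos : 0 < m * μ₀ := by positivity
    have habs : z ⬝ᵥ w ≤ ((m * μ₀) / 4 * ((w - e *ᵥ (eᵀ *ᵥ w)) ⬝ᵥ (w - e *ᵥ (eᵀ *ᵥ w)))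
        + (z ⬝ᵥ z) / ((m * μ₀) / 4)) / 2 := by
      rw [hzp]
      refine le_trans (le_abs_self _) ?_
      rw [dotProduct_comm]
      exact dot_amgm _ z ((m * μ₀) / 4) (by positivity)
    refine hAKin ▸ arith2 (z ⬝ᵥ w) ((w - e *ᵥ (eᵀ *ᵥ w)) ⬝ᵥ (w - e *ᵥ (eᵀ *ᵥ w)))
      (z ⬝ᵥ z) (m * μ₀) hGpos (dot_self_nonneg z) (dot_self_nonneg _) ?_ habs
    rw [hA1]
    exact hlw
  -- quadratic form bounds for S*S - T*T
  have hform0 : ∀ v : Fin n → ℝ, 0 ≤ v ⬝ᵥ (S * S - T * T) *ᵥ v := by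
    intro v
    rw [hDmat, dot_conj]
    have h := hKipd.posSemidef.dotProduct_mulVec_nonneg (MM *ᵥ v)
    rwa [star_trivial] at h
  have hform1 : ∀ v : Fin n → ℝ,
      v ⬝ᵥ (S * S - T * T) *ᵥ v ≤ (3 * cM / (m * μ₀)) * (v ⬝ᵥ v) := by
    intro v
    rw [hDmat, dot_conj]
    have hz : eᵀ *ᵥ (MM *ᵥ v) = 0 := by
      rw [Matrix.mulVec_mulVec, heM, Matrix.zero_mulVec]
    have h1 := hKinvb (MM *ᵥ v) hz
    have h2 := hMMb v
    calc (MM *ᵥ v) ⬝ᵥ (K m)⁻¹ *ᵥ (MM *ᵥ v)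
        ≤ 3 / (m * μ₀) * ((MM *ᵥ v) ⬝ᵥ (MM *ᵥ v)) := h1
      _ ≤ 3 / (m * μ₀) * (cM * (v ⬝ᵥ v)) := by
          apply mul_le_mul_of_nonneg_left h2; positivity
      _ = (3 * cM / (m * μ₀)) * (v ⬝ᵥ v) := by ring
  have hβnn : (0 : ℝ) ≤ 3 * cM / (m * μ₀) := by positivity
  have hev := eig_sq_le S T hSpsd hTpsd (3 * cM / (m * μ₀)) hβnn hform0 hform1 hCh
  have hent := herm_entry_bound (S - T) hCh (3 * cM / (m * μ₀)) hβnn hev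
  have hnorm := norm_le_card_mul (S - T) (Real.sqrt (3 * cM / (m * μ₀)))
    (Real.sqrt_nonneg _) hent
  rw [Fintype.card_fin] at hnorm
  have hsplit : Real.sqrt (3 * cM / (m * μ₀)) = Real.sqrt (3 * cM / μ₀) / Real.sqrt m := by
    rw [show 3 * cM / (m * μ₀) = (3 * cM / μ₀) / m by field_simp, Real.sqrt_div]
    positivity
  have hsm : 0 < Real.sqrt m := Real.sqrt_pos.2 hmpos
  calc ‖S - T‖ ≤ (n : ℝ) * Real.sqrt (3 * cM / (m * μ₀)) := hnorm
    _ = ((n : ℝ) * Real.sqrt (3 * cM / μ₀)) / Real.sqrt m := by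
        rw [hsplit]; ring
    _ ≤ ((n : ℝ) * Real.sqrt (3 * cM / μ₀) + 1) / Real.sqrt m := by
        gcongr
        linarith
end
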